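/- Let p = (p_1,...,p_t) be a sequence of positive integers summing to m. Then the polynomial F_p satisfies F_p(-n) = (-1)^{m+t} \sum_{q} F_q(n+1), where the sum ranges over all compositions q of m that coarsen p (i.e., p refines q as compositions of m). -/

import Mathlib

open Finset

/-- `Fsum p n = ∑_{0 ≤ k₁ < ⋯ < k_t ≤ n-1} k₁^{p₁} ⋯ k_t^{p_t}`, where `t = p.length`. -/
def Fsum (p : List ℕ) (n : ℕ) : ℚ :=
  ∑ k ∈ Finset.univ.filter (fun k : Fin p.length → Fin n => ∀ i j, i < j → k i < k j),
    ∏ i, ((k i : ℕ) : ℚ) ^ p.get i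

/-- `c` is a composition of the integer `m`: a list of positive integers summing to `m`. -/
def IsIntComp (m : ℕ) (c : List ℕ) : Prop := (∀ x ∈ c, 0 < x) ∧ c.sum = m

/-- `c` refines the composition `a`: `c` is a concatenation of compositions of the parts
of `a`, in order. -/
def RefinesInt (c a : List ℕ) : Prop :=
  ∃ cs : List (List ℕ), List.Forall₂ (fun ci ai => IsIntComp ai ci) cs a ∧ c = cs.flatten

def R : List ℕ → ℕ → ℚ
  | [], _ => 1
  | x :: xs, N => ∑ k ∈ range N, (k : ℚ) ^ x * R xs k

def S (L N : ℕ) (f : ℕ → ℕ → ℚ) : ℚ :=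
  ∑ σ ∈ univ.filter (fun σ : Fin L → Fin N => ∀ i j, i < j → σ i < σ j),
    ∏ i : Fin L, f i.val (σ i).val

def Sp (p : List ℕ) : Set (List ℕ) :=
  {q | ∃ cs : List (List ℕ), (∀ c ∈ cs, c ≠ []) ∧ cs.flatten = p ∧ q = cs.map List.sum}

/-- `R l N`: sum over decreasing-from-head chains; `R p.reverse N = Fsum p N`. -/
lemma exists_poly_sum (g : Polynomial ℚ) :
    ∃ G : Polynomial ℚ, ∀ n : ℕ, G.eval (n : ℚ) = ∑ k ∈ range n, g.eval (k : ℚ) := by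
  induction g using Polynomial.induction_on' with
  | add f g hf hg =>
    obtain ⟨F, hF⟩ := hf; obtain ⟨G, hG⟩ := hg
    exact ⟨F + G, fun n => by simp [hF, hG, Finset.sum_add_distrib]⟩
  | monomial p a =>
    refine ⟨Polynomial.C a * ∑ i ∈ range (p + 1),
      Polynomial.C (bernoulli i * ((p + 1).choose i) / (p + 1)) * Polynomial.X ^ (p + 1 - i),
      fun n => ?_⟩
    have h := sum_range_pow n p
    simp only [Polynomial.eval_mul, Polynomial.eval_C, Polynomial.eval_finset_sum,
      Polynomial.eval_pow, Polynomial.eval_X, Polynomial.eval_monomial]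
    rw [← Finset.mul_sum]
    congr 1
    rw [h]
    exact Finset.sum_congr rfl fun i _ => by ring

lemma exists_poly (l : List ℕ) : ∃ G : Polynomial ℚ, ∀ n : ℕ, G.eval (n : ℚ) = R l n := by
  induction l with
  | nil => exact ⟨1, fun n => by simp [R]⟩
  | cons x xs ih =>
    obtain ⟨G, hG⟩ := ih
    obtain ⟨H, hH⟩ := exists_poly_sum (Polynomial.X ^ x * G)
    exact ⟨H, fun n => by simp only [hH, R, Polynomial.eval_mul, Polynomial.eval_pow,
      Polynomial.eval_X, hG]⟩

lemma S_congr (L N : ℕ) (f g : ℕ → ℕ → ℚ) (h : ∀ i < L, ∀ v, f i v = g i v) :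
    S L N f = S L N g := by
  unfold S
  exact Finset.sum_congr rfl fun σ _ => Finset.prod_congr rfl fun i _ => h i i.isLt _

lemma S_key (t N : ℕ) (f : ℕ → ℕ → ℚ) :
    S (t + 1) N f = ∑ k ∈ range N, f t k * S t k f := by
  classical
  rw [← Fin.sum_univ_eq_sum_range (fun k => f t k * S t k f)]
  unfold S
  rw [← Finset.sum_fiberwise_of_maps_to (g := fun σ : Fin (t+1) → Fin N => σ (Fin.last t))
      (fun σ _ => Finset.mem_univ _)]
  refine Finset.sum_congr rfl fun v _ => ?_
  rw [Finset.mul_sum]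
  have hmem : ∀ σ : Fin (t+1) → Fin N,
      σ ∈ filter (fun i => i (Fin.last t) = v)
        (filter (fun σ : Fin (t+1) → Fin N => ∀ i j, i < j → σ i < σ j) univ) ↔
      ((∀ i j, i < j → σ i < σ j) ∧ σ (Fin.last t) = v) := by
    intro σ; simp [Finset.mem_filter]
  refine Finset.sum_bij'
    (i := fun σ hσ => fun i : Fin t =>
      (⟨(σ i.castSucc).val, by
        have h := (hmem σ).1 hσ
        have := h.1 i.castSucc (Fin.last t) (Fin.castSucc_lt_last i)
        rw [h.2] at this; exact this⟩ : Fin v.val))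
    (j := fun τ hτ => fun j : Fin (t+1) =>
      if h : (j : ℕ) < t then ⟨(τ ⟨j, h⟩).val, lt_trans (τ ⟨j, h⟩).isLt v.isLt⟩ else v)
    ?_ ?_ ?_ ?_ ?_
  · intro σ hσ
    have h := (hmem σ).1 hσ
    simp only [Finset.mem_filter, Finset.mem_univ, true_and]
    intro i j hij
    rw [Fin.mk_lt_mk]
    exact h.1 _ _ (Fin.castSucc_lt_castSucc_iff.2 hij)
  · intro τ hτ
    simp only [Finset.mem_filter, Finset.mem_univ, true_and] at hτ
    rw [hmem]
    constructor
    · intro i j hij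
      rw [Fin.lt_def] at hij
      by_cases hi : (i : ℕ) < t <;> by_cases hj : (j : ℕ) < t
      · simp only [hi, hj, dif_pos, Fin.lt_def]
        exact_mod_cast hτ _ _ (by simp only [Fin.lt_def]; exact hij)
      · simp only [hi, hj, dif_pos, dif_neg, not_false_iff, Fin.lt_def]
        exact (τ ⟨i, hi⟩).isLt
      · exfalso; have := j.isLt; omega
      · exfalso; have := j.isLt; omega
    · simp only [show ¬((Fin.last t : ℕ) < t) from by simp, dif_neg, not_false_iff]
  · intro σ hσ
    have h := (hmem σ).1 hσ
    funext j
    by_cases hj : (j : ℕ) < t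
    · simp only [hj, dif_pos]
      exact Fin.ext (by simp [Fin.castSucc])
    · simp only [hj, dif_neg, not_false_iff]
      have hjl : j = Fin.last t := Fin.ext (by have := j.isLt; simp only [Fin.val_last]; omega)
      rw [hjl, h.2]
  · intro τ hτ
    funext i
    apply Fin.ext
    have hi : ((Fin.castSucc i : Fin (t+1)) : ℕ) < t := by simp
    simp [hi]
  · intro σ hσ
    have h := (hmem σ).1 hσ
    rw [Fin.prod_univ_castSucc (f := fun i : Fin (t+1) => f i.val (σ i).val)]
    rw [show ((σ (Fin.last t)) : ℕ) = v from congrArg Fin.val h.2, mul_comm]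
    simp [Fin.last]

lemma fsum_eq_S (p : List ℕ) (N : ℕ) :
    Fsum p N = S p.length N (fun j v => (v : ℚ) ^ p.getD j 0) := by
  unfold Fsum S
  refine Finset.sum_congr rfl fun σ _ => Finset.prod_congr rfl fun i _ => ?_
  show _ = ((σ i : ℕ) : ℚ) ^ p.getD i.val 0
  rw [List.getD_eq_getElem _ _ i.isLt]
  rfl

lemma fsum_eq_R (p : List ℕ) (N : ℕ) : Fsum p N = R p.reverse N := by
  induction p using List.reverseRecOn generalizing N with
  | nil =>
    simp only [Fsum, R, List.reverse_nil]
    rw [Finset.filter_true_of_mem (fun σ _ => by intro i j _; exact (Fin.cast (by simp : ([] : List ℕ).length = 0) i).elim0)]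
    simp
  | append_singleton ps x ih =>
    rw [fsum_eq_S]
    have hlen : (ps ++ [x]).length = ps.length + 1 := by simp
    rw [hlen, S_key]
    rw [List.reverse_append, List.reverse_singleton, List.singleton_append, R]
    refine Finset.sum_congr rfl fun k hk => ?_
    have h1 : (ps ++ [x]).getD ps.length 0 = x := by
      rw [List.getD_eq_getElem _ _ (by simp)]
      simp
    rw [h1]
    congr 1
    rw [S_congr _ _ _ (fun j v => (v : ℚ) ^ ps.getD j 0)
      (fun j hj v => by rw [List.getD_append _ _ _ _ hj])]
    rw [← fsum_eq_S, ih]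

/-- The set of coarsenings of `p`. -/
lemma Sp_nil : Sp [] = {[]} := by
  ext q
  constructor
  · rintro ⟨cs, hne, hj, hq⟩
    have : cs = [] := by
      cases cs with
      | nil => rfl
      | cons c cs' =>
        exfalso
        have hc : c = [] := by
          have := List.flatten_eq_nil_iff.1 hj
          exact this c (by simp)
        exact hne c (by simp) hc
    simp [hq, this]
  · rintro rfl
    exact ⟨[], by simp, by simp, by simp⟩

lemma Sp_sum {p q : List ℕ} (h : q ∈ Sp p) : q.sum = p.sum := by
  obtain ⟨cs, _, hj, rfl⟩ := h
  rw [← hj, List.sum_flatten]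

lemma Sp_pos {p q : List ℕ} (hp : ∀ x ∈ p, 0 < x) (h : q ∈ Sp p) : ∀ y ∈ q, 0 < y := by
  obtain ⟨cs, hne, hj, rfl⟩ := h
  intro y hy
  rw [List.mem_map] at hy
  obtain ⟨c, hc, rfl⟩ := hy
  refine List.sum_pos c (fun z hz => hp z ?_) (hne c hc)
  rw [← hj]
  exact List.mem_flatten.2 ⟨c, hc, hz⟩

lemma Sp_ne_nil {ps : List ℕ} {x : ℕ} {q : List ℕ} (h : q ∈ Sp (ps ++ [x])) : q ≠ [] := by
  obtain ⟨cs, hne, hj, rfl⟩ := h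
  intro hq
  rw [List.map_eq_nil_iff] at hq
  subst hq
  simp at hj

lemma Sp_concat (ps : List ℕ) (x : ℕ) :
    Sp (ps ++ [x]) = (fun r => r ++ [x]) '' Sp ps ∪
      (fun r => r.dropLast ++ [r.getLastD 0 + x]) '' {r | r ∈ Sp ps ∧ r ≠ []} := by
  ext q
  constructor
  · rintro ⟨cs, hne, hj, rfl⟩
    rcases List.eq_nil_or_concat cs with rfl | ⟨cs', c, rfl⟩
    · simp at hj
    have hc : c ≠ [] := hne c (by simp)
    rcases List.eq_nil_or_concat c with rfl | ⟨c', a, rfl⟩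
    · exact absurd rfl hc
    have hj' : (cs'.flatten ++ c') ++ [a] = ps ++ [x] := by
      simpa [List.append_assoc] using hj
    obtain ⟨hj2, hax⟩ := List.append_inj' hj' rfl
    have hax' : a = x := by simpa using hax
    subst hax'
    by_cases hc' : c' = []
    · subst hc'
      left
      refine ⟨cs'.map List.sum, ⟨cs', fun c hc => hne c (by simp [hc]), by simpa using hj2, rfl⟩, ?_⟩
      simp
    · right
      refine ⟨(cs' ++ [c']).map List.sum,
        ⟨⟨cs' ++ [c'], fun c hc => ?_, by simpa using hj2, rfl⟩, by simp⟩, ?_⟩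
      · rcases List.mem_append.1 hc with h | h
        · exact hne c (by simp [h])
        · simp at h; subst h; exact hc'
      · simp only [List.map_append, List.map_cons, List.map_nil]
        rw [List.dropLast_concat, List.getLastD_concat]
        simp [List.sum_append, add_comm]
  · rintro (⟨r, ⟨cs, hne, hj, rfl⟩, rfl⟩ | ⟨r, ⟨⟨cs, hne, hj, rfl⟩, hr⟩, rfl⟩)
    · exact ⟨cs ++ [[x]], fun c hc => by
        rcases List.mem_append.1 hc with h | h
        · exact hne c h
        · simp at h; subst h; simp, by simp [hj], by simp⟩
    · have hcs : cs ≠ [] := by rintro rfl; simp at hr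
      rcases List.eq_nil_or_concat cs with rfl | ⟨cs', c, rfl⟩
      · exact absurd rfl hcs
      refine ⟨cs' ++ [c ++ [x]], fun d hd => ?_, ?_, ?_⟩
      · rcases List.mem_append.1 hd with h | h
        · exact hne d (by simp [h])
        · simp at h; subst h; simp
      · simp only [List.flatten_append, List.flatten_cons, List.flatten_nil, List.append_nil,
          ← List.append_assoc]
        rw [← hj]
        simp [List.append_assoc]
      · simp only [List.map_append, List.map_cons, List.map_nil,
          List.dropLast_concat, List.getLastD_concat]
        simp [List.sum_append, add_comm]

lemma Sp_finite (p : List ℕ) : (Sp p).Finite := by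
  induction p using List.reverseRecOn with
  | nil => rw [Sp_nil]; exact Set.finite_singleton _
  | append_singleton ps x ih =>
    rw [Sp_concat]
    exact (ih.image _).union ((ih.subset (fun r hr => hr.1)).image _)

private lemma conv1 {cs : List (List ℕ)} {q : List ℕ}
    (h : List.Forall₂ (fun ci ai => IsIntComp ai ci) cs q) (hq : ∀ a ∈ q, 0 < a) :
    (∀ c ∈ cs, c ≠ []) ∧ q = cs.map List.sum := by
  induction h with
  | nil => simp
  | @cons c a cs' q' hca _ ih =>
    have ha : 0 < a := hq a (by simp)
    obtain ⟨ih1, ih2⟩ := ih (fun b hb => hq b (by simp [hb]))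
    refine ⟨fun d hd => ?_, by simp [← ih2, ← hca.2]⟩
    rcases List.mem_cons.1 hd with rfl | hd'
    · rintro rfl; rw [← hca.2] at ha; simp at ha
    · exact ih1 d hd'

private lemma conv2 : ∀ (cs : List (List ℕ)), (∀ c ∈ cs, ∀ y ∈ c, 0 < y) →
    List.Forall₂ (fun ci ai => IsIntComp ai ci) cs (cs.map List.sum)
  | [], _ => List.Forall₂.nil
  | c :: cs', h => by
    refine List.Forall₂.cons ⟨h c (by simp), rfl⟩ (conv2 cs' (fun d hd => h d (by simp [hd])))

lemma T_eq_Sp (p : List ℕ) (hp : ∀ x ∈ p, 0 < x) (m : ℕ) (hm : p.sum = m) (q : List ℕ) :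
    (IsIntComp m q ∧ RefinesInt p q) ↔ q ∈ Sp p := by
  constructor
  · rintro ⟨⟨hqpos, hqsum⟩, cs, hf, hj⟩
    obtain ⟨h1, h2⟩ := conv1 hf hqpos
    exact ⟨cs, h1, hj.symm, h2⟩
  · rintro h
    obtain ⟨cs, hne, hj, hq⟩ := h
    refine ⟨⟨Sp_pos hp ⟨cs, hne, hj, hq⟩, by rw [Sp_sum ⟨cs, hne, hj, hq⟩, hm]⟩, cs, ?_, hj.symm⟩
    rw [hq]
    exact conv2 cs (fun c hc y hy => hp y (by rw [← hj]; exact List.mem_flatten.2 ⟨c, hc, hy⟩))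

lemma R_step (y : ℕ) (l : List ℕ) (M : ℕ) :
    R (y :: l) (M + 1) = R (y :: l) M + (M : ℚ) ^ y * R l M := by
  simp [R, Finset.sum_range_succ]

lemma poly_eq_of_nat_eval (P Q : Polynomial ℚ) (h : ∀ n : ℕ, P.eval (n : ℚ) = Q.eval (n : ℚ)) :
    P = Q := by
  have h0 : P - Q = 0 := by
    apply Polynomial.eq_zero_of_infinite_isRoot
    apply Set.Infinite.mono (s := Set.range (Nat.cast : ℕ → ℚ))
    · rintro z ⟨n, rfl⟩
      simp [Polynomial.IsRoot, h n]
    · exact Set.infinite_range_of_injective Nat.cast_injective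
  exact sub_eq_zero.1 h0

lemma sum_decomp (ps : List ℕ) (x : ℕ) (hp : ∀ y ∈ ps, 0 < y) (φ : List ℕ → ℚ) :
    ∑ q ∈ (Sp_finite (ps ++ [x])).toFinset, φ q =
      ∑ r ∈ (Sp_finite ps).toFinset, φ (r ++ [x]) +
      ∑ r ∈ (Sp_finite ps).toFinset.filter (· ≠ []),
        φ (r.dropLast ++ [r.getLastD 0 + x]) := by
  classical
  set F := (Sp_finite ps).toFinset with hF
  have hmemF : ∀ r, r ∈ F ↔ r ∈ Sp ps := fun r => Set.Finite.mem_toFinset _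
  have hU : (Sp_finite (ps ++ [x])).toFinset =
      F.image (fun r => r ++ [x]) ∪
      (F.filter (· ≠ [])).image (fun r => r.dropLast ++ [r.getLastD 0 + x]) := by
    ext q
    simp only [Set.Finite.mem_toFinset, Sp_concat, Set.mem_union, Set.mem_image,
      Finset.mem_union, Finset.mem_image, Finset.mem_filter, hmemF, Set.mem_setOf_eq]
  have hdisj : Disjoint (F.image (fun r => r ++ [x]))
      ((F.filter (· ≠ [])).image (fun r => r.dropLast ++ [r.getLastD 0 + x])) := by
    rw [Finset.disjoint_left]
    rintro q hq1 hq2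
    obtain ⟨r, hr, rfl⟩ := Finset.mem_image.1 hq1
    obtain ⟨e, he, heq⟩ := Finset.mem_image.1 hq2
    obtain ⟨he1, he2⟩ := Finset.mem_filter.1 he
    obtain ⟨e', b, rfl⟩ := (List.eq_nil_or_concat e).resolve_left he2
    simp only [List.concat_eq_append] at heq hq2 he he1 ⊢
    rw [List.dropLast_concat, List.getLastD_concat] at heq
    have := (List.append_inj' heq rfl).2
    have hb : 0 < b := Sp_pos hp ((hmemF _).1 he1) b (by simp)
    simp at this
    omega
  rw [hU, Finset.sum_union hdisj]
  congr 1
  · rw [Finset.sum_image]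
    intro a _ b _ hab
    exact (List.append_inj' hab rfl).1
  · rw [Finset.sum_image]
    intro a ha b hb hab
    obtain ⟨a', c, rfl⟩ := (List.eq_nil_or_concat a).resolve_left (Finset.mem_filter.1 ha).2
    obtain ⟨b', d, rfl⟩ := (List.eq_nil_or_concat b).resolve_left (Finset.mem_filter.1 hb).2
    simp only [List.concat_eq_append] at hab ⊢
    rw [List.dropLast_concat, List.getLastD_concat, List.dropLast_concat,
      List.getLastD_concat] at hab
    obtain ⟨h1, h2⟩ := List.append_inj' hab rfl
    simp at h2
    rw [h1, h2]

lemma term2 (x : ℕ) (M : ℕ) (r : List ℕ) (hr : r ≠ []) :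
    R (r.dropLast ++ [r.getLastD 0 + x]).reverse (M + 1)
      = R (r.dropLast ++ [r.getLastD 0 + x]).reverse M
        + (M : ℚ) ^ x * (R r.reverse (M + 1) - R r.reverse M) := by
  obtain ⟨e, b, rfl⟩ := (List.eq_nil_or_concat r).resolve_left hr
  simp only [List.concat_eq_append]
  rw [List.dropLast_concat, List.getLastD_concat]
  rw [show (e ++ [b + x]).reverse = (b + x) :: e.reverse by simp]
  rw [show (e ++ [b]).reverse = b :: e.reverse by simp]
  rw [R_step, R_step, pow_add]
  ring

lemma main : ∀ (p : List ℕ), (∀ y ∈ p, 0 < y) →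
    ∀ Q : Polynomial ℚ, (∀ N : ℕ, Q.eval (N : ℚ) = R p.reverse N) →
    ∀ n : ℕ, Q.eval (-(n : ℚ)) =
      (-1) ^ (p.sum + p.length) * ∑ q ∈ (Sp_finite p).toFinset, R q.reverse (n + 1) := by
  intro p
  induction p using List.reverseRecOn with
  | nil =>
    intro _ Q hQ n
    have hQ1 : Q = Polynomial.C 1 := poly_eq_of_nat_eval _ _ (fun N => by rw [hQ]; simp [R])
    have hSet : (Sp_finite []).toFinset = {([] : List ℕ)} := by
      ext q; simp [Set.Finite.mem_toFinset, Sp_nil]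
    rw [hQ1, hSet]
    simp [R]
  | append_singleton ps x ih =>
    intro hp Q hQ
    have hpps : ∀ y ∈ ps, 0 < y := fun y hy => hp y (by simp [hy])
    have hx : 0 < x := hp x (by simp)
    obtain ⟨Q', hQ'⟩ := exists_poly ps.reverse
    have hrev : (ps ++ [x]).reverse = x :: ps.reverse := by simp
    have hcomp : Q.comp (Polynomial.X + Polynomial.C 1) = Q + Polynomial.X ^ x * Q' := by
      apply poly_eq_of_nat_eval
      intro N
      rw [Polynomial.eval_comp]
      simp only [Polynomial.eval_add, Polynomial.eval_X, Polynomial.eval_C,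
        Polynomial.eval_mul, Polynomial.eval_pow]
      rw [show ((N : ℚ) + 1) = ((N + 1 : ℕ) : ℚ) by push_cast; ring]
      rw [hQ, hQ, hrev, R_step, hQ']
    have key : ∀ z : ℚ, Q.eval (z + 1) = Q.eval z + z ^ x * Q'.eval z := by
      intro z
      have := congrArg (Polynomial.eval z) hcomp
      simpa [Polynomial.eval_comp] using this
    have hexp : (ps ++ [x]).sum + (ps ++ [x]).length = (ps.sum + ps.length) + (x + 1) := by
      simp [List.sum_append]; omega
    intro n
    induction n with
    | zero =>
      rw [show (-(0:ℕ) : ℚ) = ((0:ℕ) : ℚ) by simp, hQ, hrev]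
      rw [show R (x :: ps.reverse) 0 = 0 by simp [R]]
      rw [Finset.sum_congr rfl (fun q hq => ?_), Finset.sum_const, smul_zero, mul_zero]
      have hq' := (Set.Finite.mem_toFinset _).1 hq
      obtain ⟨e, b, rfl⟩ := (List.eq_nil_or_concat q).resolve_left (Sp_ne_nil hq')
      simp only [List.concat_eq_append] at hq' ⊢
      have hb : 0 < b := Sp_pos hp hq' b (by simp)
      rw [show (e ++ [b]).reverse = b :: e.reverse by simp]
      show R (b :: e.reverse) (0 + 1) = 0
      rw [R_step]
      simp [R, zero_pow (by omega : b ≠ 0)]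
    | succ n ihn =>
      have hstep := key (-(↑(n+1) : ℚ))
      rw [show (-(↑(n+1) : ℚ) + 1) = -(n : ℚ) by push_cast; ring] at hstep
      have hQ'val : Q'.eval (-(↑(n+1) : ℚ)) =
          (-1) ^ (ps.sum + ps.length) * ∑ r ∈ (Sp_finite ps).toFinset, R r.reverse (n + 1 + 1) := by
        have := ih hpps Q' hQ' (n + 1)
        rw [show ((↑(n+1) : ℚ)) = ((n + 1 : ℕ) : ℚ) by push_cast; ring]
        exact this
      -- CombKey
      have hcomb : ∑ q ∈ (Sp_finite (ps ++ [x])).toFinset, R q.reverse (n + 1 + 1) =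
          ∑ q ∈ (Sp_finite (ps ++ [x])).toFinset, R q.reverse (n + 1) +
          ((n : ℚ) + 1) ^ x * ∑ r ∈ (Sp_finite ps).toFinset, R r.reverse (n + 1 + 1) := by
        rw [sum_decomp ps x hpps, sum_decomp ps x hpps]
        have e1 : ∀ r ∈ (Sp_finite ps).toFinset,
            R ((r ++ [x]).reverse) (n + 1 + 1) =
              R ((r ++ [x]).reverse) (n + 1) + ((n:ℚ)+1) ^ x * R r.reverse (n + 1) := by
          intro r _
          rw [show (r ++ [x]).reverse = x :: r.reverse by simp, R_step]
          push_cast; ring_nf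
        have e2 : ∀ r ∈ (Sp_finite ps).toFinset.filter (· ≠ []),
            R ((r.dropLast ++ [r.getLastD 0 + x]).reverse) (n + 1 + 1) =
              R ((r.dropLast ++ [r.getLastD 0 + x]).reverse) (n + 1)
              + ((n:ℚ)+1) ^ x * (R r.reverse (n + 1 + 1) - R r.reverse (n + 1)) := by
          intro r hr
          have := term2 x (n+1) r (Finset.mem_filter.1 hr).2
          push_cast at this ⊢
          exact this
        rw [Finset.sum_congr rfl e1, Finset.sum_congr rfl e2]
        rw [Finset.sum_add_distrib, Finset.sum_add_distrib]
        have e3 : ∑ r ∈ (Sp_finite ps).toFinset.filter (· ≠ []),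
            ((n:ℚ)+1) ^ x * (R r.reverse (n + 1 + 1) - R r.reverse (n + 1)) =
            ∑ r ∈ (Sp_finite ps).toFinset,
            ((n:ℚ)+1) ^ x * (R r.reverse (n + 1 + 1) - R r.reverse (n + 1)) := by
          apply Finset.sum_filter_of_ne
          intro r _ hne
          rintro rfl
          simp [R] at hne
        rw [e3, ← Finset.mul_sum, ← Finset.mul_sum, Finset.sum_sub_distrib]
        ring
      -- final algebra
      rw [show (-(↑(n+1) : ℚ)) = -(n:ℚ) - 1 by push_cast; ring] at hstep ⊢
      have hQeval : Q.eval (-(n:ℚ) - 1) = Q.eval (-(n:ℚ)) - (-(n:ℚ)-1) ^ x * Q'.eval (-(n:ℚ)-1) := by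
        rw [show Q'.eval (-(↑n:ℚ) - 1) = Q'.eval (-(↑(n+1):ℚ)) by push_cast; ring_nf] at *
        linarith [hstep]
      rw [hQeval, ihn]
      rw [show Q'.eval (-(↑n:ℚ) - 1) = Q'.eval (-(↑(n+1):ℚ)) by push_cast; ring_nf]
      rw [hQ'val, hcomb, hexp]
      rw [show (-(↑n:ℚ) - 1) ^ x = (-1)^x * ((n:ℚ)+1)^x by rw [← neg_pow]; ring_nf]
      rw [pow_add ((-1:ℚ)) (ps.sum + ps.length) (x+1), pow_succ]
      push_cast
      ring


/-- Reciprocity: `F_p(-n) = (-1)^(m+t) ∑_{q ⪰ p} F_q(n+1)`, the sum over compositions `q`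
of `m` coarsened by `p`. -/
theorem stmt_6 (p : List ℕ) (hp : ∀ x ∈ p, 0 < x) (m : ℕ) (hm : p.sum = m)
    (Q : Polynomial ℚ) (hQ : ∀ n : ℕ, Q.eval (n : ℚ) = Fsum p n) (n : ℕ) :
    Q.eval (-(n : ℚ)) =
      (-1) ^ (m + p.length) *
        ∑ᶠ (q : List ℕ) (_ : IsIntComp m q ∧ RefinesInt p q), Fsum q (n + 1) := by
  subst hm
  have hconv : ∑ᶠ (q : List ℕ) (_ : IsIntComp p.sum q ∧ RefinesInt p q), Fsum q (n + 1)
      = ∑ q ∈ (Sp_finite p).toFinset, R q.reverse (n + 1) := by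
    rw [finsum_cond_eq_sum_of_cond_iff (fun q => Fsum q (n+1)) (t := (Sp_finite p).toFinset)
      (fun {q} _ => by rw [T_eq_Sp p hp p.sum rfl q, Set.Finite.mem_toFinset])]
    exact Finset.sum_congr rfl fun q _ => fsum_eq_R q (n+1)
  rw [hconv]
  exact main p hp Q (fun N => by rw [hQ, fsum_eq_R]) n
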